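/- arXiv:2604.20433 — 2 statements merged into one kernel-verified Lean document; each statement's English description precedes it below -/
import Mathlib

section
/- For every reward R ∈ ℝ^m with R ≤ 0, the admissible set D(R) is nonempty, compact, and convex; in particular, both the zero vector and the optimal value vector V*_R belong to D(R). -/
open Matrix MeasureTheory Filter Topology

noncomputable section

/-- The policy matrix `Π` of a deterministic policy `π`. -/
def polMat {n m : ℕ} (π : Fin n → Fin m) : Matrix (Fin n) (Fin m) ℝ :=
  Matrix.of fun i j => if j = π i then 1 else 0

/-- The matrix `S` with `S^j_i = 1` iff `s j = i`. -/
def projMat {n m : ℕ} (s : Fin m → Fin n) : Matrix (Fin m) (Fin n) ℝ :=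
  Matrix.of fun j i => if s j = i then 1 else 0

/-- A row-stochastic matrix: nonnegative entries, rows summing to one. -/
def RowStochastic {n m : ℕ} (F : Matrix (Fin m) (Fin n) ℝ) : Prop :=
  (∀ j i, 0 ≤ F j i) ∧ ∀ j, ∑ i, F j i = 1

/-- A deterministic policy: a section of the state projection `s`. -/
def IsPolicy {n m : ℕ} (s : Fin m → Fin n) (π : Fin n → Fin m) : Prop :=
  ∀ i, s (π i) = i

/-- The value vector `V_{π,R} = (I − γΠF)⁻¹ Π R`. -/
def valueVec {n m : ℕ} (γ : ℝ) (F : Matrix (Fin m) (Fin n) ℝ)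
    (π : Fin n → Fin m) (R : Fin m → ℝ) : Fin n → ℝ :=
  ((1 : Matrix (Fin n) (Fin n) ℝ) - γ • (polMat π * F))⁻¹ *ᵥ (polMat π *ᵥ R)

/-- A policy is optimal for `R` when its value vector dominates all others componentwise. -/
def IsOptimal {n m : ℕ} (s : Fin m → Fin n) (γ : ℝ) (F : Matrix (Fin m) (Fin n) ℝ)
    (R : Fin m → ℝ) (π : Fin n → Fin m) : Prop :=
  IsPolicy s π ∧ ∀ π', IsPolicy s π' → ∀ i, valueVec γ F π' R i ≤ valueVec γ F π R i

/-- `hmax R i = max_{j ∈ U_i} R j`. -/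
def hmax {n m : ℕ} (s : Fin m → Fin n) (R : Fin m → ℝ) (i : Fin n) : ℝ :=
  sSup {x | ∃ j, s j = i ∧ R j = x}

/- ### auxiliary lemmas -/

lemma polMat_mulVec {n m : ℕ} (π : Fin n → Fin m) (R : Fin m → ℝ) (i : Fin n) :
    (polMat π *ᵥ R) i = R (π i) := by
  simp [polMat, Matrix.mulVec, dotProduct, ite_mul]

lemma polMat_mul_apply {n m : ℕ} (π : Fin n → Fin m) (F : Matrix (Fin m) (Fin n) ℝ)
    (i l : Fin n) : (polMat π * F) i l = F (π i) l := by
  simp [polMat, Matrix.mul_apply, ite_mul]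

lemma projMat_mulVec {n m : ℕ} (s : Fin m → Fin n) (Δ : Fin n → ℝ) (j : Fin m) :
    (projMat s *ᵥ Δ) j = Δ (s j) := by
  simp [projMat, Matrix.mulVec, dotProduct, mul_ite]

lemma rowStochastic_polMat_mul {n m : ℕ} (π : Fin n → Fin m)
    {F : Matrix (Fin m) (Fin n) ℝ} (hF : RowStochastic F) :
    RowStochastic (polMat π * F) := by
  constructor
  · intro i l; rw [polMat_mul_apply]; exact hF.1 _ _
  · intro i; simp only [polMat_mul_apply]; exact hF.2 _

lemma isUnit_one_sub_smul {n : ℕ} {γ : ℝ} (hγ0 : 0 ≤ γ) (hγ1 : γ < 1)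
    (M : Matrix (Fin n) (Fin n) ℝ) (hM : RowStochastic M) :
    IsUnit ((1 : Matrix (Fin n) (Fin n) ℝ) - γ • M) := by
  rw [← Matrix.mulVec_injective_iff_isUnit]
  intro v w hvw
  have hu : v - w = γ • (M *ᵥ (v - w)) := by
    have h0 : ((1 : Matrix (Fin n) (Fin n) ℝ) - γ • M) *ᵥ (v - w) = 0 := by
      rw [Matrix.mulVec_sub, hvw, sub_self]
    rw [Matrix.sub_mulVec, Matrix.one_mulVec, Matrix.smul_mulVec, sub_eq_zero] at h0
    exact h0
  set u := v - w with hudef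
  rw [← sub_eq_zero]
  rcases Nat.eq_zero_or_pos n with h0 | hpos
  · subst h0; funext i; exact i.elim0
  haveI : Nonempty (Fin n) := Fin.pos_iff_nonempty.mp hpos
  have hne : (Finset.univ : Finset (Fin n)).Nonempty := Finset.univ_nonempty
  obtain ⟨k₀, -, hk₀⟩ := Finset.exists_max_image Finset.univ (fun k => |u k|) hne
  have hbound : |u k₀| ≤ γ * |u k₀| := by
    have h1 : u k₀ = γ * (M *ᵥ u) k₀ := by
      have := congrFun hu k₀; simpa using this
    have h2 : |(M *ᵥ u) k₀| ≤ |u k₀| := by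
      have : |(M *ᵥ u) k₀| ≤ ∑ l, M k₀ l * |u l| := by
        rw [Matrix.mulVec, dotProduct]
        refine (Finset.abs_sum_le_sum_abs _ _).trans ?_
        refine Finset.sum_le_sum fun l _ => ?_
        rw [abs_mul, abs_of_nonneg (hM.1 _ _)]
      refine this.trans ?_
      calc ∑ l, M k₀ l * |u l| ≤ ∑ l, M k₀ l * |u k₀| :=
            Finset.sum_le_sum fun l _ => mul_le_mul_of_nonneg_left
              (hk₀ l (Finset.mem_univ l)) (hM.1 _ _)
        _ = |u k₀| := by rw [← Finset.sum_mul, hM.2]; ring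
    calc |u k₀| = γ * |(M *ᵥ u) k₀| := by rw [h1, abs_mul, abs_of_nonneg hγ0]
      _ ≤ γ * |u k₀| := mul_le_mul_of_nonneg_left h2 hγ0
  have hzero : |u k₀| = 0 := by nlinarith [abs_nonneg (u k₀)]
  funext l
  have := hk₀ l (Finset.mem_univ l)
  have : |u l| ≤ 0 := by linarith
  exact abs_eq_zero.mp (le_antisymm this (abs_nonneg _))

/-- Bellman-type fixed-point equation for the value of any policy. -/
lemma value_fixed_point {n m : ℕ} {γ : ℝ} (hγ0 : 0 ≤ γ) (hγ1 : γ < 1)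
    {F : Matrix (Fin m) (Fin n) ℝ} (hF : RowStochastic F)
    (π : Fin n → Fin m) (R : Fin m → ℝ) (i : Fin n) :
    valueVec γ F π R i = R (π i) + γ * (F *ᵥ valueVec γ F π R) (π i) := by
  set A := (1 : Matrix (Fin n) (Fin n) ℝ) - γ • (polMat π * F) with hA
  have hunit : IsUnit A := isUnit_one_sub_smul hγ0 hγ1 _ (rowStochastic_polMat_mul π hF)
  have hAinv : A * A⁻¹ = 1 := Matrix.mul_nonsing_inv _ (Matrix.isUnit_iff_isUnit_det _ |>.mp hunit)
  have key : A *ᵥ valueVec γ F π R = polMat π *ᵥ R := by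
    rw [valueVec, ← hA, Matrix.mulVec_mulVec, hAinv, Matrix.one_mulVec]
  have hcomp := congrFun key i
  rw [hA, Matrix.sub_mulVec, Matrix.one_mulVec, Matrix.smul_mulVec] at hcomp
  have hPF : ((polMat π * F) *ᵥ valueVec γ F π R) i = (F *ᵥ valueVec γ F π R) (π i) := by
    simp only [Matrix.mulVec, dotProduct, polMat_mul_apply]
  have hPR := polMat_mulVec π R i
  simp only [Pi.sub_apply, Pi.smul_apply, smul_eq_mul] at hcomp
  rw [hPF, hPR] at hcomp
  linarith

/-- Bellman optimality inequality: the optimal value dominates every one-step lookahead. -/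
lemma bellman_ineq {n m : ℕ} {s : Fin m → Fin n} {γ : ℝ} (hγ0 : 0 ≤ γ) (hγ1 : γ < 1)
    {F : Matrix (Fin m) (Fin n) ℝ} (hF : RowStochastic F)
    {R : Fin m → ℝ} {πs : Fin n → Fin m} (hπs : IsOptimal s γ F R πs) (j : Fin m) :
    R j + γ * (F *ᵥ valueVec γ F πs R) j ≤ valueVec γ F πs R (s j) := by
  classical
  set V := valueVec γ F πs R with hV
  set i := s j with hi
  set π' := Function.update πs i j with hπ'
  have hpol' : IsPolicy s π' := by
    intro k
    by_cases hk : k = i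
    · subst hk; rw [hπ', Function.update_self]
    · rw [hπ', Function.update_of_ne hk]; exact hπs.1 k
  set V' := valueVec γ F π' R with hV'
  have hle : ∀ k, V' k ≤ V k := hπs.2 π' hpol'
  set e : Fin n → ℝ := fun k => V' k - V k with he
  have heF : ∀ j', (F *ᵥ V') j' - (F *ᵥ V) j' = (F *ᵥ e) j' := by
    intro j'
    simp only [Matrix.mulVec, dotProduct, he]
    rw [← Finset.sum_sub_distrib]
    exact Finset.sum_congr rfl fun l _ => by ring
  have hne : (Finset.univ : Finset (Fin n)).Nonempty := ⟨i, Finset.mem_univ i⟩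
  obtain ⟨k₀, -, hk₀⟩ := Finset.exists_min_image Finset.univ e hne
  set μ := e k₀ with hμ
  have hFe : ∀ j', μ ≤ (F *ᵥ e) j' := by
    intro j'
    simp only [Matrix.mulVec, dotProduct]
    calc μ = ∑ l, F j' l * μ := by rw [← Finset.sum_mul, hF.2]; ring
      _ ≤ ∑ l, F j' l * e l :=
        Finset.sum_le_sum fun l _ => mul_le_mul_of_nonneg_left
          (hk₀ l (Finset.mem_univ l)) (hF.1 _ _)
  -- fixed point equations
  have hVeq : ∀ k, V k = R (πs k) + γ * (F *ᵥ V) (πs k) := fun k =>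
    value_fixed_point hγ0 hγ1 hF πs R k
  have hV'eq : ∀ k, V' k = R (π' k) + γ * (F *ᵥ V') (π' k) := fun k =>
    value_fixed_point hγ0 hγ1 hF π' R k
  have hV'i : V' i = R j + γ * (F *ᵥ V') j := by
    have := hV'eq i; rwa [hπ', Function.update_self] at this
  -- goal rewritten:   R j + γ (F V) j - V i = e i - γ (F e) j
  have hEi : e i = V' i - V i := rfl
  have hmulj : γ * (F *ᵥ V') j - γ * (F *ᵥ V) j = γ * (F *ᵥ e) j := by
    rw [← heF j]; ring
  have hgoal : R j + γ * (F *ᵥ V) j - V i = e i - γ * (F *ᵥ e) j := by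
    linarith [hmulj, hV'i, hEi]
  have hei : e i ≤ 0 := by rw [hEi]; linarith [hle i]
  by_cases hki : k₀ = i
  · -- min attained at i
    have h1 : γ * μ ≤ γ * (F *ᵥ e) j := mul_le_mul_of_nonneg_left (hFe j) hγ0
    have h2 : μ = e i := by rw [hμ, hki]
    have h3 : 0 ≤ (1 - γ) * (-(e i)) :=
      mul_nonneg (by linarith) (by linarith)
    nlinarith [hgoal]
  · -- min attained elsewhere: μ = γ (F e)(πs k₀) ≥ γ μ so μ ≥ 0
    have hEk : e k₀ = V' k₀ - V k₀ := rfl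
    have hek : e k₀ = γ * (F *ᵥ e) (πs k₀) := by
      have h1 := hVeq k₀
      have h2 := hV'eq k₀
      rw [hπ', Function.update_of_ne hki] at h2
      have hmulk : γ * (F *ᵥ V') (πs k₀) - γ * (F *ᵥ V) (πs k₀) = γ * (F *ᵥ e) (πs k₀) := by
        rw [← heF (πs k₀)]; ring
      linarith [hmulk, hEk]
    have hμ0 : 0 ≤ μ := by
      have h4 : γ * μ ≤ γ * (F *ᵥ e) (πs k₀) := mul_le_mul_of_nonneg_left (hFe (πs k₀)) hγ0
      nlinarith [hek]
    have hμi : μ ≤ e i := hk₀ i (Finset.mem_univ i)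
    have hei0 : e i = 0 := le_antisymm hei (le_trans hμ0 hμi)
    have h5 : γ * μ ≤ γ * (F *ᵥ e) j := mul_le_mul_of_nonneg_left (hFe j) hγ0
    have h6 : 0 ≤ γ * μ := mul_nonneg hγ0 hμ0
    linarith [hgoal]

/-- For `R ≤ 0`, the admissible set `D(R)` is nonempty (it contains `0` and
the optimal value vector `V*_R`), compact, and convex. -/
theorem admissible_set_properties {n m : ℕ} (hn : 1 ≤ n) (hm : 1 ≤ m)
    (s : Fin m → Fin n) (hs : Function.Surjective s)
    (γ : ℝ) (hγ0 : 0 ≤ γ) (hγ1 : γ < 1)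
    (F : Matrix (Fin m) (Fin n) ℝ) (hF : RowStochastic F)
    (R : Fin m → ℝ) (hR : R ≤ 0)
    (πs : Fin n → Fin m) (hπs : IsOptimal s γ F R πs)
    (D : Set (Fin n → ℝ))
    (hD : D = {Δ : Fin n → ℝ | R + (γ • F - projMat s) *ᵥ Δ ≤ 0} ∩
        {Δ : Fin n → ℝ | ∀ i, |valueVec γ F πs R i - Δ i| ≤ |valueVec γ F πs R i|}) :
    (0 : Fin n → ℝ) ∈ D ∧ valueVec γ F πs R ∈ D ∧
      D.Nonempty ∧ IsCompact D ∧ Convex ℝ D := by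
  set V := valueVec γ F πs R with hV
  have hBv : ∀ (Δ : Fin n → ℝ) (j : Fin m),
      ((γ • F - projMat s) *ᵥ Δ) j = γ * (F *ᵥ Δ) j - Δ (s j) := by
    intro Δ j
    rw [Matrix.sub_mulVec, Matrix.smul_mulVec, Pi.sub_apply, Pi.smul_apply,
      smul_eq_mul, projMat_mulVec]
  have h0mem : (0 : Fin n → ℝ) ∈ D := by
    rw [hD]
    constructor
    · intro j
      simp only [Matrix.mulVec_zero, Pi.add_apply, Pi.zero_apply, add_zero]
      exact hR j
    · intro i; simp
  have hVmem : V ∈ D := by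
    rw [hD]
    constructor
    · intro j
      have := bellman_ineq hγ0 hγ1 hF hπs j
      simp only [Pi.add_apply, Pi.zero_apply]
      rw [hBv V j]
      rw [← hV] at this
      linarith
    · intro i; simp [abs_nonneg]
  -- closedness of the first set
  have hclosed1 : IsClosed {Δ : Fin n → ℝ | R + (γ • F - projMat s) *ᵥ Δ ≤ 0} := by
    have : {Δ : Fin n → ℝ | R + (γ • F - projMat s) *ᵥ Δ ≤ 0} =
        ⋂ j, {Δ : Fin n → ℝ | R j + ((γ • F - projMat s) *ᵥ Δ) j ≤ 0} := by
      ext Δ; simp [Pi.le_def, Set.mem_iInter]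
    rw [this]
    refine isClosed_iInter fun j => ?_
    have hcont : Continuous fun Δ : Fin n → ℝ => R j + ((γ • F - projMat s) *ᵥ Δ) j := by
      simp only [Matrix.mulVec, dotProduct]
      exact continuous_const.add (continuous_finset_sum _ fun l _ =>
        continuous_const.mul (continuous_apply l))
    exact isClosed_le hcont continuous_const
  -- the second set is a product of intervals
  have hbox : {Δ : Fin n → ℝ | ∀ i, |V i - Δ i| ≤ |V i|} =
      Set.pi Set.univ fun i => Set.Icc (V i - |V i|) (V i + |V i|) := by
    ext Δ
    simp only [Set.mem_setOf_eq, Set.mem_pi, Set.mem_univ, forall_true_left, Set.mem_Icc]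
    refine forall_congr' fun i => ?_
    rw [abs_le]
    constructor
    · rintro ⟨h1, h2⟩; constructor <;> linarith
    · rintro ⟨h1, h2⟩; constructor <;> linarith
  have hcompact : IsCompact D := by
    rw [hD, hbox]
    exact IsCompact.inter_left (isCompact_univ_pi fun i => isCompact_Icc) hclosed1
  have hconvex : Convex ℝ D := by
    rw [hD]
    refine Convex.inter ?_ ?_
    · intro x hx y hy a b ha hb hab
      intro j
      have hx' := hx j
      have hy' := hy j
      simp only [Pi.add_apply, Pi.zero_apply] at hx' hy' ⊢
      have hlin : ((γ • F - projMat s) *ᵥ (a • x + b • y)) j =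
          a * ((γ • F - projMat s) *ᵥ x) j + b * ((γ • F - projMat s) *ᵥ y) j := by
        rw [Matrix.mulVec_add, Matrix.mulVec_smul, Matrix.mulVec_smul]
        simp [smul_eq_mul]
      rw [hlin]
      have hRj : a * R j + b * R j = R j := by rw [← add_mul, hab, one_mul]
      nlinarith [mul_nonpos_of_nonneg_of_nonpos ha hx',
        mul_nonpos_of_nonneg_of_nonpos hb hy']
    · intro x hx y hy a b ha hb hab
      intro i
      have hx' := hx i
      have hy' := hy i
      have : V i - (a • x + b • y) i = a * (V i - x i) + b * (V i - y i) := by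
        simp only [Pi.add_apply, Pi.smul_apply, smul_eq_mul]
        have : a * V i + b * V i = V i := by rw [← add_mul, hab, one_mul]
        linarith
      rw [this]
      calc |a * (V i - x i) + b * (V i - y i)|
          ≤ |a * (V i - x i)| + |b * (V i - y i)| := abs_add_le _ _
        _ = a * |V i - x i| + b * |V i - y i| := by
            rw [abs_mul, abs_mul, abs_of_nonneg ha, abs_of_nonneg hb]
        _ ≤ a * |V i| + b * |V i| := by
            have := mul_le_mul_of_nonneg_left hx' ha
            have := mul_le_mul_of_nonneg_left hy' hb
            linarith
        _ = |V i| := by rw [← add_mul, hab, one_mul]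
  exact ⟨h0mem, hVmem, ⟨0, h0mem⟩, hcompact, hconvex⟩
end
end

section
/- Let R_0 ∈ ℝ^m, let (Δ_t)_{t∈ℕ} be any sequence in ℝ^n, and define R_{t+1} := R_t + BΔ_t. Let R̄ be the unique normal reward in the ℓ-orbit of R_0. Then for every t, R_{t+1} − R̄ = −B(V*_{R_0} − ∑_{τ=0}^{t} Δ_τ); consequently R_t converges to R̄ as t → ∞ if and only if the partial sums ∑_{τ=0}^{t} Δ_τ converge to V*_{R_0} as t → ∞. -/
open Matrix MeasureTheory Filter Topology

noncomputable section

/-- A reward is normal when its optimal value vector is zero. -/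
def IsNormal {n m : ℕ} (s : Fin m → Fin n) (γ : ℝ) (F : Matrix (Fin m) (Fin n) ℝ)
    (R : Fin m → ℝ) : Prop :=
  ∃ π, IsOptimal s γ F R π ∧ valueVec γ F π R = 0

lemma aux_det_ne_zero {n m : ℕ} (hn : 1 ≤ n) (γ : ℝ) (hγ0 : 0 ≤ γ) (hγ1 : γ < 1)
    (F : Matrix (Fin m) (Fin n) ℝ) (hF : RowStochastic F) (π : Fin n → Fin m) :
    ((1 : Matrix (Fin n) (Fin n) ℝ) - γ • (polMat π * F)).det ≠ 0 := by
  haveI : NeZero n := ⟨by omega⟩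
  set M := polMat π * F with hM
  have hMentry : ∀ i k, M i k = F (π i) k := by
    intro i k
    simp [hM, Matrix.mul_apply, polMat, Finset.sum_ite_eq]
  intro hdet
  rw [← Matrix.exists_mulVec_eq_zero_iff] at hdet
  obtain ⟨v, hv0, hv⟩ := hdet
  apply hv0
  have hvM : ∀ i, v i = γ * ∑ k, M i k * v k := by
    intro i
    have h := congrFun hv i
    have expand : ∀ x, ((1 : Matrix (Fin n) (Fin n) ℝ) - γ • M) i x * v x
        = (if i = x then v x else 0) - γ * (M i x * v x) := by
      intro x
      simp only [Matrix.sub_apply, Matrix.smul_apply, Matrix.one_apply, smul_eq_mul, sub_mul,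
        mul_assoc]
      split <;> simp
    simp only [Matrix.mulVec, dotProduct, Pi.zero_apply, expand,
      Finset.sum_sub_distrib, Finset.sum_ite_eq, Finset.mem_univ, if_true,
      ← Finset.mul_sum] at h
    linarith
  obtain ⟨i0, -, hmax'⟩ := Finset.exists_max_image Finset.univ (fun i => |v i|)
    ⟨default, Finset.mem_univ _⟩
  have key : |v i0| ≤ γ * |v i0| := by
    calc |v i0| = γ * |∑ k, M i0 k * v k| := by
          rw [hvM i0, abs_mul, abs_of_nonneg hγ0]
      _ ≤ γ * ∑ k, M i0 k * |v i0| := by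
          apply mul_le_mul_of_nonneg_left _ hγ0
          calc |∑ k, M i0 k * v k| ≤ ∑ k, |M i0 k * v k| := Finset.abs_sum_le_sum_abs _ _
            _ ≤ ∑ k, M i0 k * |v i0| := by
                apply Finset.sum_le_sum
                intro k _
                rw [abs_mul, abs_of_nonneg (by rw [hMentry]; exact hF.1 _ _)]
                exact mul_le_mul_of_nonneg_left (hmax' k (Finset.mem_univ _))
                  (by rw [hMentry]; exact hF.1 _ _)
      _ = γ * |v i0| := by
          rw [← Finset.sum_mul]
          congr 2
          have : ∑ k, M i0 k = 1 := by
            simp only [hMentry]; exact hF.2 _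
          rw [this, one_mul]
  have hvi0 : |v i0| = 0 := by nlinarith [abs_nonneg (v i0)]
  funext i
  have := hmax' i (Finset.mem_univ _)
  simp only [hvi0] at this
  have := abs_nonneg (v i)
  simp only [Pi.zero_apply]
  linarith [abs_le.mp (le_antisymm ‹|v i| ≤ 0› ‹0 ≤ |v i|› ▸ le_refl (0:ℝ))]

lemma polMat_mul_projMat {n m : ℕ} (s : Fin m → Fin n) (π : Fin n → Fin m)
    (hπ : IsPolicy s π) : polMat π * projMat s = 1 := by
  ext i i'
  simp only [Matrix.mul_apply, polMat, projMat, Matrix.of_apply, ite_mul, one_mul, zero_mul,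
    Finset.sum_ite_eq', Finset.mem_univ, if_true, hπ i, Matrix.one_apply]

lemma polMat_mul_B {n m : ℕ} (γ : ℝ) (F : Matrix (Fin m) (Fin n) ℝ) (s : Fin m → Fin n)
    (π : Fin n → Fin m) (hπ : IsPolicy s π) :
    polMat π * (γ • F - projMat s)
      = -((1 : Matrix (Fin n) (Fin n) ℝ) - γ • (polMat π * F)) := by
  rw [Matrix.mul_sub, polMat_mul_projMat s π hπ, Matrix.mul_smul, neg_sub]

lemma valueVec_shift {n m : ℕ} (hn : 1 ≤ n) (γ : ℝ) (hγ0 : 0 ≤ γ) (hγ1 : γ < 1)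
    (F : Matrix (Fin m) (Fin n) ℝ) (hF : RowStochastic F) (s : Fin m → Fin n)
    (π : Fin n → Fin m) (hπ : IsPolicy s π) (R : Fin m → ℝ) (Δ : Fin n → ℝ) :
    valueVec γ F π (R + (γ • F - projMat s) *ᵥ Δ) = valueVec γ F π R - Δ := by
  set A := (1 : Matrix (Fin n) (Fin n) ℝ) - γ • (polMat π * F) with hA
  have hdet := aux_det_ne_zero hn γ hγ0 hγ1 F hF π
  have hAinv : A⁻¹ * A = 1 := Matrix.nonsing_inv_mul A (Ne.isUnit hdet)
  have key : polMat π *ᵥ ((γ • F - projMat s) *ᵥ Δ) = -(A *ᵥ Δ) := by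
    rw [Matrix.mulVec_mulVec, polMat_mul_B γ F s π hπ, Matrix.neg_mulVec]
  show A⁻¹ *ᵥ (polMat π *ᵥ (R + (γ • F - projMat s) *ᵥ Δ)) = _
  rw [Matrix.mulVec_add, key, Matrix.mulVec_add, Matrix.mulVec_neg,
    show A⁻¹ *ᵥ (A *ᵥ Δ) = Δ from by rw [Matrix.mulVec_mulVec, hAinv, Matrix.one_mulVec],
    sub_eq_add_neg]
  rfl

/-- Error coordinates: `R_{t+1} − R̄ = −B(V*_{R₀} − ∑_{τ≤t} Δ_τ)`, where `R̄`
is the unique normal reward in the ℓ-orbit of `R₀`; consequently `R_t → R̄` iff the partial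
sums of the inputs converge to `V*_{R₀}`. -/
theorem normalizing_control_characterization {n m : ℕ} (hn : 1 ≤ n) (hm : 1 ≤ m)
    (s : Fin m → Fin n) (hs : Function.Surjective s)
    (γ : ℝ) (hγ0 : 0 ≤ γ) (hγ1 : γ < 1)
    (F : Matrix (Fin m) (Fin n) ℝ) (hF : RowStochastic F)
    (R0 : Fin m → ℝ) (πs : Fin n → Fin m) (hπs : IsOptimal s γ F R0 πs)
    (Δ : ℕ → Fin n → ℝ) (Rseq : ℕ → Fin m → ℝ)
    (hinit : Rseq 0 = R0)
    (hstep : ∀ t, Rseq (t + 1) = Rseq t + (γ • F - projMat s) *ᵥ Δ t)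
    (Rbar : Fin m → ℝ)
    (horbit : ∃ Δ' : Fin n → ℝ, Rbar = R0 + (γ • F - projMat s) *ᵥ Δ')
    (hnormal : IsNormal s γ F Rbar) :
    (∀ t, Rseq (t + 1) - Rbar =
        -((γ • F - projMat s) *ᵥ
          (valueVec γ F πs R0 - ∑ τ ∈ Finset.range (t + 1), Δ τ))) ∧
      (Tendsto Rseq atTop (𝓝 Rbar) ↔
        Tendsto (fun t => ∑ τ ∈ Finset.range (t + 1), Δ τ) atTop
          (𝓝 (valueVec γ F πs R0))) := by
  obtain ⟨Δ', hΔ'⟩ := horbit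
  obtain ⟨π, ⟨hπpol, hπopt⟩, hπval⟩ := hnormal
  set V := valueVec γ F πs R0 with hV
  -- valueVec of Rbar is shifted
  have hshift : ∀ π'' , IsPolicy s π'' →
      valueVec γ F π'' Rbar = valueVec γ F π'' R0 - Δ' := fun π'' h => by
    rw [hΔ']; exact valueVec_shift hn γ hγ0 hγ1 F hF s π'' h R0 Δ'
  have h1 : valueVec γ F π R0 = Δ' := by
    have := hshift π hπpol
    rw [hπval] at this
    funext i
    have := congrFun this i
    simp only [Pi.zero_apply, Pi.sub_apply] at this
    linarith
  have h2 : valueVec γ F π R0 = V := by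
    funext i
    apply le_antisymm (hπs.2 π hπpol i)
    have := hπopt πs hπs.1 i
    rw [hshift π hπpol, hshift πs hπs.1] at this
    simp only [Pi.sub_apply] at this
    linarith
  have hΔeq : Δ' = V := by rw [← h1, h2]
  have hRbar : Rbar = R0 + (γ • F - projMat s) *ᵥ V := by rw [hΔ', hΔeq]
  -- closed form for Rseq
  have hR : ∀ t, Rseq (t + 1) = R0 + (γ • F - projMat s) *ᵥ (∑ τ ∈ Finset.range (t + 1), Δ τ) := by
    intro t
    induction t with
    | zero => simp [hstep 0, hinit]
    | succ t ih =>
        rw [hstep (t + 1), ih, add_assoc, ← Matrix.mulVec_add, ← Finset.sum_range_succ]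
  have part1 : ∀ t, Rseq (t + 1) - Rbar =
      -((γ • F - projMat s) *ᵥ (V - ∑ τ ∈ Finset.range (t + 1), Δ τ)) := by
    intro t
    rw [hR t, hRbar, Matrix.mulVec_sub]
    abel
  refine ⟨part1, ?_⟩
  -- continuity of mulVec maps
  have hcont : ∀ {a b : ℕ} (M : Matrix (Fin a) (Fin b) ℝ), Continuous (fun x => M *ᵥ x) :=
    fun M => LinearMap.continuous_of_finiteDimensional (Matrix.mulVecLin M)
  set B := γ • F - projMat s with hB
  set P : ℕ → Fin n → ℝ := fun t => ∑ τ ∈ Finset.range (t + 1), Δ τ with hP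
  set A := (1 : Matrix (Fin n) (Fin n) ℝ) - γ • (polMat πs * F) with hA
  have hdet := aux_det_ne_zero hn γ hγ0 hγ1 F hF πs
  have hAinv : A⁻¹ * A = 1 := Matrix.nonsing_inv_mul A (Ne.isUnit hdet)
  constructor
  · intro h
    have h1' : Tendsto (fun t => Rseq (t + 1) - Rbar) atTop (𝓝 0) := by
      have hh : Tendsto (fun t => Rseq (t + 1)) atTop (𝓝 Rbar) :=
        h.comp (tendsto_add_atTop_nat 1)
      simpa using hh.sub (tendsto_const_nhds : Tendsto (fun _ : ℕ => Rbar) atTop (𝓝 Rbar))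
    have h2' : Tendsto (fun t => B *ᵥ (V - P t)) atTop (𝓝 0) := by
      have : Tendsto (fun t => -(Rseq (t + 1) - Rbar)) atTop (𝓝 (-0)) := h1'.neg
      simp only [neg_zero] at this
      refine this.congr fun t => ?_
      rw [part1 t, neg_neg]
    -- recover V - P t via A⁻¹ Π
    have hrec : ∀ t, V - P t = A⁻¹ *ᵥ (-(polMat πs *ᵥ (B *ᵥ (V - P t)))) := by
      intro t
      rw [Matrix.mulVec_mulVec, hB, polMat_mul_B γ F s πs hπs.1, ← hA, Matrix.neg_mulVec,
        neg_neg, Matrix.mulVec_mulVec, hAinv, Matrix.one_mulVec]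
    have h3' : Tendsto (fun t => V - P t) atTop (𝓝 0) := by
      have hL : Continuous (fun x : Fin m → ℝ => A⁻¹ *ᵥ (-(polMat πs *ᵥ x))) :=
        (hcont A⁻¹).comp ((hcont (polMat πs)).neg)
      have := (hL.tendsto 0).comp h2'
      simp only [Matrix.mulVec_zero, neg_zero, Function.comp] at this
      exact this.congr fun t => (hrec t).symm
    have := (tendsto_const_nhds : Tendsto (fun _ : ℕ => V) atTop (𝓝 V)).sub h3'
    simp only [sub_zero] at this
    exact this.congr fun t => by simp
  · intro h
    have h1' : Tendsto (fun t => V - P t) atTop (𝓝 0) := by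
      simpa using (tendsto_const_nhds (x := V)).sub h
    have h2' : Tendsto (fun t => B *ᵥ (V - P t)) atTop (𝓝 0) := by
      have := ((hcont B).tendsto 0).comp h1'
      simpa [Function.comp_def, Matrix.mulVec_zero] using this
    have h3' : Tendsto (fun t => Rseq (t + 1)) atTop (𝓝 Rbar) := by
      have : Tendsto (fun t => Rbar + -(B *ᵥ (V - P t))) atTop (𝓝 (Rbar + -0)) :=
        tendsto_const_nhds.add h2'.neg
      simp only [neg_zero, add_zero] at this
      refine this.congr fun t => ?_
      have := part1 t
      rw [← this]
      abel
    exact (tendsto_add_atTop_iff_nat 1).mp h3'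
end
end
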